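/- In a SETAF whose attack relation derives from inconsistency of supports in a knowledge base as follows — arguments are pairs (H, φ) with H ⊆ K consistent and φ ∈ CNbar(H), and a set of arguments X attacks (H, φ) iff the union of the conclusions of X together with some subset of H is inconsistent — the set Args(Δ) of all arguments whose supports lie inside a maximal consistent subset Δ of K is conflict-free. -/
import Mathlib


def consistent {L : Type*} (CNbar : Set L → Set L) (X : Set L) : Prop :=
  CNbar X ≠ Set.univ

/-- An argument over the KB `K`: a pair `(H, φ)` with `H ⊆ K` consistent and `φ ∈ CNbar H`. -/
def isArg {L : Type*} (CNbar : Set L → Set L) (K : Set L) (p : Set L × L) : Prop :=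
  p.1 ⊆ K ∧ consistent CNbar p.1 ∧ p.2 ∈ CNbar p.1

/-- Collective (undercut) attack: the union of the supports of `X` is consistent and the
conclusions of `X` together with some subset of the support of `p` are inconsistent. -/
def attacksArg {L : Type*} (CNbar : Set L → Set L) (X : Set (Set L × L)) (p : Set L × L) : Prop :=
  consistent CNbar (⋃ B ∈ X, B.1) ∧
  ∃ H' : Set L, H' ⊆ p.1 ∧ ¬ consistent CNbar (Prod.snd '' X ∪ H')

def ArgsOf {L : Type*} (CNbar : Set L → Set L) (K Δ : Set L) : Set (Set L × L) :=
  {p | isArg CNbar K p ∧ p.1 ⊆ Δ}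

theorem args_mcs_conflict_free {L : Type*} (CNbar : Set L → Set L)
    (hmono : ∀ X Y : Set L, X ⊆ Y → CNbar X ⊆ CNbar Y)
    (hexp : ∀ X : Set L, X ⊆ CNbar X)
    (hidem : ∀ X : Set L, CNbar (CNbar X) = CNbar X)
    (K Δ : Set L) (hΔK : Δ ⊆ K) (hΔcons : consistent CNbar Δ)
    (hΔmax : ∀ Δ' : Set L, Δ' ⊆ K → consistent CNbar Δ' → Δ ⊆ Δ' → Δ' = Δ) :
    ¬ ∃ X : Set (Set L × L), X ⊆ ArgsOf CNbar K Δ ∧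
        ∃ p ∈ ArgsOf CNbar K Δ, attacksArg CNbar X p := by
  rintro ⟨X, hX, p, hp, hcons, H', hH'p, hbad⟩
  apply hbad
  have hsub : Prod.snd '' X ∪ H' ⊆ CNbar Δ := by
    intro x hx
    rcases hx with ⟨B, hB, rfl⟩ | hx
    · exact hmono B.1 Δ (hX hB).2 ((hX hB).1.2.2)
    · exact hexp Δ (hH'p.trans hp.2 hx)
  intro huniv
  apply hΔcons
  have := hmono _ _ hsub
  rw [hidem, huniv] at this
  exact Set.eq_univ_of_univ_subset this
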